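/- Consider alternating gradient descent on the BLAST factorization loss ℓ(U_*, V_*, s_{*,*}) = Σ_{i,j} (1/2)‖A_{i,j} − U_i diag(s_{i,j}) V_j^T‖_F², with updates first on all U_i, then all V_j, then all s_{i,j}. If the step sizes satisfy 0 < η_{U_i} ≤ 1/σ₁(V̄_i^T V̄_i), 0 < η_{V_j} ≤ 1/σ₁(Ū_j^T Ū_j), and 0 < η_{s_{i,j}} ≤ 1/σ₁((U_i'^T U_i') ⊙ (V_j'^T V_j')) (with U_i', V_j' the freshly updated factors), then the loss is monotonically non-increasing: ℓ(U_*^{(k+1)}, V_*^{(k+1)}, s_{*,*}^{(k+1)}) ≤ ℓ(U_*^{(k)}, V_*^{(k)}, s_{*,*}^{(k)}). -/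

import Mathlib

open Matrix

/-- The largest singular value of a real matrix, realized as the operator norm of the
associated Euclidean linear map. -/
noncomputable def sigma1 {m n : ℕ} (M : Matrix (Fin m) (Fin n) ℝ) : ℝ :=
  ‖LinearMap.toContinuousLinearMap (Matrix.toEuclideanLin M)‖

lemma mulVec_norm_le {n m : ℕ} (H : Matrix (Fin m) (Fin n) ℝ) (v : Fin n → ℝ) :
    ‖(WithLp.equiv 2 (Fin m → ℝ)).symm (H *ᵥ v)‖ ≤
      sigma1 H * ‖(WithLp.equiv 2 (Fin n → ℝ)).symm v‖ := by
  have := (LinearMap.toContinuousLinearMap (Matrix.toEuclideanLin H)).le_opNorm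
    ((WithLp.equiv 2 (Fin n → ℝ)).symm v)
  simpa [sigma1] using this

lemma quad_le_sigma1 {n : ℕ} (H : Matrix (Fin n) (Fin n) ℝ) (v : Fin n → ℝ) :
    ∑ l, (H *ᵥ v) l * v l ≤ sigma1 H * ∑ l, (v l) ^ 2 := by
  set w : EuclideanSpace ℝ (Fin n) := (WithLp.equiv 2 (Fin n → ℝ)).symm v with hw
  set u : EuclideanSpace ℝ (Fin n) := (WithLp.equiv 2 (Fin n → ℝ)).symm (H *ᵥ v) with hu
  have h1 : ∑ l, (H *ᵥ v) l * v l = inner ℝ u w := by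
    simp [PiLp.inner_apply, u, w, RCLike.inner_apply, mul_comm]
  have h2 : ‖w‖ ^ 2 = ∑ l, (v l) ^ 2 := by
    rw [EuclideanSpace.norm_eq, Real.sq_sqrt (by positivity)]
    refine Finset.sum_congr rfl fun l _ => ?_
    simp [w, Real.norm_eq_abs, sq_abs]
  have h3 : inner ℝ u w ≤ ‖u‖ * ‖w‖ := real_inner_le_norm u w
  have h4 : ‖u‖ ≤ sigma1 H * ‖w‖ := mulVec_norm_le H v
  calc ∑ l, (H *ᵥ v) l * v l ≤ ‖u‖ * ‖w‖ := h1 ▸ h3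
    _ ≤ (sigma1 H * ‖w‖) * ‖w‖ := mul_le_mul_of_nonneg_right h4 (norm_nonneg w)
    _ = sigma1 H * ∑ l, (v l) ^ 2 := by rw [← h2]; ring

lemma ip_mul_transpose {p n q : ℕ} (R : Matrix (Fin p) (Fin q) ℝ)
    (G : Matrix (Fin p) (Fin n) ℝ) (M : Matrix (Fin n) (Fin q) ℝ) :
    ∑ k, ∑ l, R k l * (G * M) k l = ∑ k, ∑ a, (R * Mᵀ) k a * G k a := by
  refine Finset.sum_congr rfl fun k _ => ?_
  simp only [mul_apply, transpose_apply, Finset.mul_sum, Finset.sum_mul]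
  rw [Finset.sum_comm]
  refine Finset.sum_congr rfl fun a _ => Finset.sum_congr rfl fun l _ => by ring

lemma sum2_expand {p q : ℕ} (a w : Fin p → Fin q → ℝ) (η : ℝ) :
    (1/2:ℝ) * ∑ k, ∑ l, (a k l + η * w k l) ^ 2
    = (1/2:ℝ) * (∑ k, ∑ l, (a k l) ^ 2) + η * (∑ k, ∑ l, a k l * w k l)
      + η ^ 2 / 2 * (∑ k, ∑ l, (w k l) ^ 2) := by
  have h : ∀ k l, (a k l + η * w k l) ^ 2
      = (a k l) ^ 2 + (a k l * w k l) * (2 * η) + (w k l) ^ 2 * η ^ 2 := fun k l => by ring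
  simp only [h, Finset.sum_add_distrib, ← Finset.sum_mul]
  ring

lemma sum_rot3 {α β γ : Type*} [Fintype α] [Fintype β] [Fintype γ] (F : α → β → γ → ℝ) :
    ∑ x, ∑ y, ∑ z, F x y z = ∑ z, ∑ x, ∑ y, F x y z := by
  calc ∑ x, ∑ y, ∑ z, F x y z = ∑ x, ∑ z, ∑ y, F x y z :=
        Finset.sum_congr rfl fun x _ => Finset.sum_comm
    _ = ∑ z, ∑ x, ∑ y, F x y z := Finset.sum_comm

lemma sum_rot4 {α β γ δ : Type*} [Fintype α] [Fintype β] [Fintype γ] [Fintype δ]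
    (F : α → β → γ → δ → ℝ) :
    ∑ k, ∑ l, ∑ m, ∑ a, F k l m a = ∑ m, ∑ a, ∑ k, ∑ l, F k l m a := by
  calc ∑ k, ∑ l, ∑ m, ∑ a, F k l m a = ∑ k, ∑ m, ∑ a, ∑ l, F k l m a :=
        Finset.sum_congr rfl fun k _ => by
          rw [sum_rot3 (fun l m a => F k l m a), sum_rot3 (fun a l m => F k l m a)]
    _ = ∑ m, ∑ a, ∑ k, ∑ l, F k l m a := by
        rw [sum_rot3 (fun k m a => ∑ l, F k l m a), sum_rot3 (fun a k m => ∑ l, F k l m a)]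

lemma eta_mul_le_one {η σ : ℝ} (h1 : 0 < η) (h2 : η ≤ 1 / σ) (h3 : 0 ≤ σ) : η * σ ≤ 1 := by
  rcases eq_or_lt_of_le h3 with h | h
  · simp [← h]
  · calc η * σ ≤ (1 / σ) * σ := mul_le_mul_of_nonneg_right h2 h3
      _ = 1 := by field_simp

lemma gd_step {p n q b : ℕ} (C : Fin b → Matrix (Fin p) (Fin q) ℝ)
    (M : Fin b → Matrix (Fin n) (Fin q) ℝ) (X : Matrix (Fin p) (Fin n) ℝ) (η : ℝ)
    (hη : 0 < η) (hη2 : η * sigma1 (∑ j, M j * (M j)ᵀ) ≤ 1) :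
    ∑ j, (1/2:ℝ) * ∑ k, ∑ l,
        (C j k l - ((X - η • ∑ j', (X * M j' - C j') * (M j')ᵀ) * M j) k l) ^ 2
      ≤ ∑ j, (1/2:ℝ) * ∑ k, ∑ l, (C j k l - (X * M j) k l) ^ 2 := by
  set G : Matrix (Fin p) (Fin n) ℝ := ∑ j', (X * M j' - C j') * (M j')ᵀ with hG
  set H : Matrix (Fin n) (Fin n) ℝ := ∑ j, M j * (M j)ᵀ with hH
  have hHsymm : Hᵀ = H := by
    rw [hH, transpose_sum]
    exact Finset.sum_congr rfl fun j _ => by rw [transpose_mul, transpose_transpose]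
  have hent : ∀ j k l, C j k l - ((X - η • G) * M j) k l
      = (C j k l - (X * M j) k l) + η * (G * M j) k l := by
    intro j k l
    have h0 : (X - η • G) * M j = X * M j - η • (G * M j) := by
      rw [Matrix.sub_mul, Matrix.smul_mul]
    rw [h0]
    simp [Matrix.sub_apply, Matrix.smul_apply]
    ring
  have hS1 : ∑ j, ∑ k, ∑ l, (C j k l - (X * M j) k l) * (G * M j) k l
      = -∑ k, ∑ a, (G k a) ^ 2 := by
    have h1 : ∀ j, ∑ k, ∑ l, (C j k l - (X * M j) k l) * (G * M j) k l
        = ∑ k, ∑ a, ((C j - X * M j) * (M j)ᵀ) k a * G k a := by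
      intro j
      rw [← ip_mul_transpose (C j - X * M j) G (M j)]
      simp [Matrix.sub_apply]
    calc ∑ j, ∑ k, ∑ l, (C j k l - (X * M j) k l) * (G * M j) k l
        = ∑ j, ∑ k, ∑ a, ((C j - X * M j) * (M j)ᵀ) k a * G k a :=
          Finset.sum_congr rfl fun j _ => h1 j
      _ = ∑ k, ∑ a, (∑ j, ((C j - X * M j) * (M j)ᵀ) k a) * G k a := by
          rw [Finset.sum_comm]
          refine Finset.sum_congr rfl fun k _ => ?_
          rw [Finset.sum_comm]
          exact Finset.sum_congr rfl fun a _ => (Finset.sum_mul ..).symm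
      _ = -∑ k, ∑ a, (G k a) ^ 2 := by
          rw [← Finset.sum_neg_distrib]
          refine Finset.sum_congr rfl fun k _ => ?_
          rw [← Finset.sum_neg_distrib]
          refine Finset.sum_congr rfl fun a _ => ?_
          have hsum : (∑ j, ((C j - X * M j) * (M j)ᵀ)) = -G := by
            rw [hG, ← Finset.sum_neg_distrib]
            refine Finset.sum_congr rfl fun j _ => ?_
            rw [← Matrix.neg_mul, neg_sub]
          have h2 : (∑ j, ((C j - X * M j) * (M j)ᵀ) k a) = -G k a := by
            rw [← Matrix.sum_apply, hsum]; simp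
          rw [h2]; ring
  have hS2 : ∑ j, ∑ k, ∑ l, ((G * M j) k l) ^ 2
      ≤ sigma1 H * ∑ k, ∑ a, (G k a) ^ 2 := by
    have h1 : ∀ j, ∑ k, ∑ l, ((G * M j) k l) ^ 2
        = ∑ k, ∑ a, ((G * M j) * (M j)ᵀ) k a * G k a := by
      intro j
      rw [← ip_mul_transpose (G * M j) G (M j)]
      exact Finset.sum_congr rfl fun k _ => Finset.sum_congr rfl fun l _ => by ring
    have h2 : ∑ j, ∑ k, ∑ l, ((G * M j) k l) ^ 2
        = ∑ k, ∑ a, (G * H) k a * G k a := by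
      rw [Finset.sum_congr rfl fun j _ => h1 j, Finset.sum_comm]
      refine Finset.sum_congr rfl fun k _ => ?_
      rw [Finset.sum_comm]
      refine Finset.sum_congr rfl fun a _ => ?_
      rw [← Finset.sum_mul]
      congr 1
      rw [← Matrix.sum_apply]
      congr 1
      rw [hH, Matrix.mul_sum]
      exact congrFun (congrFun
        (Finset.sum_congr rfl fun j _ => Matrix.mul_assoc G (M j) ((M j)ᵀ)) k) a
    rw [h2]
    have h3 : ∀ k, ∑ a, (G * H) k a * G k a ≤ sigma1 H * ∑ a, (G k a) ^ 2 := by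
      intro k
      have h4 : ∀ a, (G * H) k a = (H *ᵥ (fun c => G k c)) a := by
        intro a
        simp only [mul_apply, mulVec, dotProduct]
        refine Finset.sum_congr rfl fun c _ => ?_
        have hca : H c a = H a c := by
          calc H c a = Hᵀ a c := rfl
            _ = H a c := by rw [hHsymm]
        rw [hca]; ring
      calc ∑ a, (G * H) k a * G k a = ∑ a, (H *ᵥ (fun c => G k c)) a * (fun c => G k c) a :=
            Finset.sum_congr rfl fun a _ => by rw [h4]
        _ ≤ sigma1 H * ∑ a, (G k a) ^ 2 := quad_le_sigma1 H _
    calc ∑ k, ∑ a, (G * H) k a * G k a ≤ ∑ k, sigma1 H * ∑ a, (G k a) ^ 2 :=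
          Finset.sum_le_sum fun k _ => h3 k
      _ = sigma1 H * ∑ k, ∑ a, (G k a) ^ 2 := (Finset.mul_sum ..).symm
  have hexp : ∑ j, (1/2:ℝ) * ∑ k, ∑ l, (C j k l - ((X - η • G) * M j) k l) ^ 2
      = (∑ j, (1/2:ℝ) * ∑ k, ∑ l, (C j k l - (X * M j) k l) ^ 2)
        + η * (∑ j, ∑ k, ∑ l, (C j k l - (X * M j) k l) * (G * M j) k l)
        + η ^ 2 / 2 * (∑ j, ∑ k, ∑ l, ((G * M j) k l) ^ 2) := by
    have h1 : ∀ j, (1/2:ℝ) * ∑ k, ∑ l, (C j k l - ((X - η • G) * M j) k l) ^ 2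
        = (1/2:ℝ) * (∑ k, ∑ l, (C j k l - (X * M j) k l) ^ 2)
          + η * (∑ k, ∑ l, (C j k l - (X * M j) k l) * (G * M j) k l)
          + η ^ 2 / 2 * (∑ k, ∑ l, ((G * M j) k l) ^ 2) := by
      intro j
      rw [show (∑ k, ∑ l, (C j k l - ((X - η • G) * M j) k l) ^ 2)
          = ∑ k, ∑ l, ((C j k l - (X * M j) k l) + η * (G * M j) k l) ^ 2 from
        Finset.sum_congr rfl fun k _ => Finset.sum_congr rfl fun l _ => by rw [hent]]
      exact sum2_expand (fun k l => C j k l - (X * M j) k l) (fun k l => (G * M j) k l) η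
    rw [Finset.sum_congr rfl fun j _ => h1 j]
    rw [Finset.sum_add_distrib, Finset.sum_add_distrib, ← Finset.mul_sum, ← Finset.mul_sum,
      ← Finset.mul_sum]
  rw [hexp, hS1]
  have hF : (0:ℝ) ≤ ∑ k, ∑ a, (G k a) ^ 2 := by positivity
  have hσ : (0:ℝ) ≤ sigma1 H := norm_nonneg _
  nlinarith [mul_le_mul_of_nonneg_left hS2 (by positivity : (0:ℝ) ≤ η ^ 2 / 2),
    mul_le_mul_of_nonneg_right hη2 hF, sq_nonneg η]

lemma gd_step_s {p r : ℕ} (Am : Matrix (Fin p) (Fin p) ℝ) (Um Vm : Matrix (Fin p) (Fin r) ℝ)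
    (x : Fin r → ℝ) (η : ℝ) (hη : 0 < η)
    (hη2 : η * sigma1 ((Umᵀ * Um).hadamard (Vmᵀ * Vm)) ≤ 1) :
    (1/2:ℝ) * ∑ k, ∑ l, (Am k l - (Um * diagonal (x - η •
        ((((Umᵀ * Um).hadamard (Vmᵀ * Vm)) *ᵥ x) - (Umᵀ * Am * Vm).diag)) * Vmᵀ) k l) ^ 2
      ≤ (1/2:ℝ) * ∑ k, ∑ l, (Am k l - (Um * diagonal x * Vmᵀ) k l) ^ 2 := by
  set H : Matrix (Fin r) (Fin r) ℝ := (Umᵀ * Um).hadamard (Vmᵀ * Vm) with hHdef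
  set g : Fin r → ℝ := H *ᵥ x - (Umᵀ * Am * Vm).diag with hgdef
  have hUDV : ∀ (y : Fin r → ℝ) (k l : Fin p),
      (Um * diagonal y * Vmᵀ) k l = ∑ m, Um k m * y m * Vm l m := by
    intro y k l
    rw [mul_apply]
    refine Finset.sum_congr rfl fun m _ => ?_
    rw [Matrix.mul_diagonal, transpose_apply]
  have hHy : ∀ (y : Fin r → ℝ) (m : Fin r),
      (H *ᵥ y) m = ∑ a, ((∑ k, Um k m * Um k a) * (∑ l, Vm l m * Vm l a)) * y a := by
    intro y m
    simp [mulVec, dotProduct, hHdef, Matrix.hadamard_apply, mul_apply, transpose_apply]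
  have hdiag : ∀ m : Fin r, (Umᵀ * Am * Vm).diag m = ∑ k, ∑ l, Um k m * Am k l * Vm l m := by
    intro m
    simp only [Matrix.diag_apply, mul_apply, transpose_apply, Finset.sum_mul]
    rw [Finset.sum_comm]
  set a : Fin p → Fin p → ℝ := fun k l => Am k l - (Um * diagonal x * Vmᵀ) k l with hadef
  set w : Fin p → Fin p → ℝ := fun k l => ∑ m, Um k m * g m * Vm l m with hwdef
  have hent : ∀ k l, Am k l - (Um * diagonal (x - η • g) * Vmᵀ) k l = a k l + η * w k l := by
    intro k l
    rw [hUDV]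
    have h0 : ∀ m : Fin r, Um k m * (x - η • g) m * Vm l m
        = Um k m * x m * Vm l m - η * (Um k m * g m * Vm l m) := by
      intro m; simp only [Pi.sub_apply, Pi.smul_apply, smul_eq_mul]; ring
    rw [Finset.sum_congr rfl fun m _ => h0 m, Finset.sum_sub_distrib, ← Finset.mul_sum]
    simp only [hadef, hwdef, hUDV]
    ring
  have hsep : ∑ k, ∑ l, a k l * w k l
      = ∑ m, g m * (∑ k, ∑ l, a k l * Um k m * Vm l m) := by
    simp only [hwdef, Finset.mul_sum]
    rw [sum_rot3 (fun k l m => a k l * (Um k m * g m * Vm l m))]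
    exact Finset.sum_congr rfl fun m _ => Finset.sum_congr rfl fun k _ =>
      Finset.sum_congr rfl fun l _ => by ring
  have hcm : ∀ m, (∑ k, ∑ l, a k l * Um k m * Vm l m) = -g m := by
    intro m
    have h1 : ∑ k, ∑ l, a k l * Um k m * Vm l m
        = (∑ k, ∑ l, Um k m * Am k l * Vm l m)
          - ∑ k, ∑ l, (∑ n, Um k n * x n * Vm l n) * Um k m * Vm l m := by
      rw [← Finset.sum_sub_distrib]
      refine Finset.sum_congr rfl fun k _ => ?_
      rw [← Finset.sum_sub_distrib]
      refine Finset.sum_congr rfl fun l _ => ?_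
      simp only [hadef, hUDV]
      ring
    have h2 : ∑ k, ∑ l, (∑ n, Um k n * x n * Vm l n) * Um k m * Vm l m = (H *ᵥ x) m := by
      have h3 : ∀ k l, (∑ n, Um k n * x n * Vm l n) * Um k m * Vm l m
          = ∑ n, (Um k m * Um k n) * (Vm l m * Vm l n) * x n := by
        intro k l
        rw [Finset.sum_mul, Finset.sum_mul]
        exact Finset.sum_congr rfl fun n _ => by ring
      rw [Finset.sum_congr rfl fun k _ => Finset.sum_congr rfl fun l _ => h3 k l]
      rw [sum_rot3 (fun k l n => (Um k m * Um k n) * (Vm l m * Vm l n) * x n)]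
      rw [hHy]
      refine Finset.sum_congr rfl fun n _ => ?_
      rw [Finset.sum_mul_sum]
      simp only [Finset.sum_mul]
    rw [h1, h2, ← hdiag]
    simp only [hgdef, Pi.sub_apply]
    ring
  have hcross : ∑ k, ∑ l, a k l * w k l = -∑ m, (g m) ^ 2 := by
    rw [hsep, ← Finset.sum_neg_distrib]
    refine Finset.sum_congr rfl fun m _ => ?_
    rw [hcm m]; ring
  have hquad : ∑ k, ∑ l, (w k l) ^ 2 = ∑ m, (H *ᵥ g) m * g m := by
    have h1 : ∀ k l, (w k l) ^ 2
        = ∑ m, ∑ n, ((Um k m * Um k n) * (Vm l m * Vm l n)) * (g m * g n) := by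
      intro k l
      rw [sq, hwdef]
      rw [Finset.sum_mul_sum]
      exact Finset.sum_congr rfl fun m _ => Finset.sum_congr rfl fun n _ => by ring
    rw [Finset.sum_congr rfl fun k _ => Finset.sum_congr rfl fun l _ => h1 k l]
    rw [sum_rot4 (fun k l m n => ((Um k m * Um k n) * (Vm l m * Vm l n)) * (g m * g n))]
    refine Finset.sum_congr rfl fun m _ => ?_
    rw [hHy, Finset.sum_mul]
    refine Finset.sum_congr rfl fun n _ => ?_
    rw [Finset.sum_mul_sum]
    simp only [Finset.sum_mul]
    exact Finset.sum_congr rfl fun k _ => Finset.sum_congr rfl fun l _ => by ring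
  have hq2 : ∑ k, ∑ l, (w k l) ^ 2 ≤ sigma1 H * ∑ m, (g m) ^ 2 := by
    rw [hquad]; exact quad_le_sigma1 H g
  have hexp : (1/2:ℝ) * ∑ k, ∑ l, (Am k l - (Um * diagonal (x - η • g) * Vmᵀ) k l) ^ 2
      = (1/2:ℝ) * (∑ k, ∑ l, (a k l) ^ 2) + η * (∑ k, ∑ l, a k l * w k l)
        + η ^ 2 / 2 * (∑ k, ∑ l, (w k l) ^ 2) := by
    rw [show (∑ k, ∑ l, (Am k l - (Um * diagonal (x - η • g) * Vmᵀ) k l) ^ 2)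
        = ∑ k, ∑ l, (a k l + η * w k l) ^ 2 from
      Finset.sum_congr rfl fun k _ => Finset.sum_congr rfl fun l _ => by rw [hent]]
    exact sum2_expand a w η
  rw [hexp, hcross]
  have hF : (0:ℝ) ≤ ∑ m, (g m) ^ 2 := by positivity
  have hσ : (0:ℝ) ≤ sigma1 H := norm_nonneg _
  have hRHS : (1/2:ℝ) * ∑ k, ∑ l, (Am k l - (Um * diagonal x * Vmᵀ) k l) ^ 2
      = (1/2:ℝ) * ∑ k, ∑ l, (a k l) ^ 2 := by
    simp only [hadef]
  rw [hRHS]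
  nlinarith [mul_le_mul_of_nonneg_left hq2 (by positivity : (0:ℝ) ≤ η ^ 2 / 2),
    mul_le_mul_of_nonneg_right hη2 hF, sq_nonneg η]
/-- Theorem 1: One round of alternating gradient descent on the BLAST
factorization loss — updating all `U_i`, then all `V_j`, then all `s_{i,j}` — with step
sizes bounded by the reciprocals of `σ₁(V̄ᵢᵀV̄ᵢ)`, `σ₁(ŪⱼᵀŪⱼ)`, and
`σ₁((Uᵢ'ᵀUᵢ') ⊙ (Vⱼ'ᵀVⱼ'))` respectively, does not increase the loss. -/
theorem blast_alternating_gd_monotone (b p r : ℕ)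
    (A : Fin b → Fin b → Matrix (Fin p) (Fin p) ℝ)
    (U V U' V' : Fin b → Matrix (Fin p) (Fin r) ℝ)
    (s s' : Fin b → Fin b → (Fin r → ℝ))
    (ηU ηV : Fin b → ℝ) (ηs : Fin b → Fin b → ℝ)
    (L : (Fin b → Matrix (Fin p) (Fin r) ℝ) → (Fin b → Matrix (Fin p) (Fin r) ℝ) →
         (Fin b → Fin b → (Fin r → ℝ)) → ℝ)
    (hL : ∀ Uc Vc sc, L Uc Vc sc = ∑ i, ∑ j, (1 / 2) * ∑ k, ∑ l,
      (A i j k l - (Uc i * Matrix.diagonal (sc i j) * (Vc j)ᵀ) k l) ^ 2)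
    (hU' : ∀ i, U' i = U i - ηU i •
      ∑ j, (U i * Matrix.diagonal (s i j) * (V j)ᵀ - A i j) * (V j * Matrix.diagonal (s i j)))
    (hV' : ∀ j, V' j = V j - ηV j •
      ∑ i, (U' i * Matrix.diagonal (s i j) * (V j)ᵀ - A i j)ᵀ * (U' i * Matrix.diagonal (s i j)))
    (hs' : ∀ i j, s' i j = s i j - ηs i j •
      ((((U' i)ᵀ * U' i).hadamard ((V' j)ᵀ * V' j)).mulVec (s i j)
        - ((U' i)ᵀ * A i j * V' j).diag))
    (hηU : ∀ i, 0 < ηU i ∧ ηU i ≤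
      1 / sigma1 (∑ j, Matrix.diagonal (s i j) * (V j)ᵀ * V j * Matrix.diagonal (s i j)))
    (hηV : ∀ j, 0 < ηV j ∧ ηV j ≤
      1 / sigma1 (∑ i, Matrix.diagonal (s i j) * (U' i)ᵀ * U' i * Matrix.diagonal (s i j)))
    (hηs : ∀ i j, 0 < ηs i j ∧ ηs i j ≤
      1 / sigma1 (((U' i)ᵀ * U' i).hadamard ((V' j)ᵀ * V' j))) :
    L U' V' s' ≤ L U V s := by
  -- Step 1 : update U
  have step1 : L U' V s ≤ L U V s := by
    rw [hL, hL]
    refine Finset.sum_le_sum fun i _ => ?_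
    set M : Fin b → Matrix (Fin r) (Fin p) ℝ := fun j => diagonal (s i j) * (V j)ᵀ with hM
    have hMt : ∀ j, (M j)ᵀ = V j * diagonal (s i j) := fun j => by
      rw [hM, transpose_mul, transpose_transpose, diagonal_transpose]
    have hHeq : (∑ j, M j * (M j)ᵀ)
        = ∑ j, diagonal (s i j) * (V j)ᵀ * V j * diagonal (s i j) :=
      Finset.sum_congr rfl fun j _ => by simp only [hMt, hM, Matrix.mul_assoc, transpose_mul, transpose_transpose, diagonal_transpose]
    have hη2 : ηU i * sigma1 (∑ j, M j * (M j)ᵀ) ≤ 1 := by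
      rw [hHeq]; exact eta_mul_le_one (hηU i).1 (hηU i).2 (norm_nonneg _)
    have key := gd_step (fun j => A i j) M (U i) (ηU i) (hηU i).1 hη2
    have hGsum : (∑ j', (U i * M j' - A i j') * (M j')ᵀ)
        = ∑ j', (U i * diagonal (s i j') * (V j')ᵀ - A i j') * (V j' * diagonal (s i j')) :=
      Finset.sum_congr rfl fun j _ => by simp only [hMt, hM, Matrix.mul_assoc, transpose_mul, transpose_transpose, diagonal_transpose]
    have hX : U i - ηU i • ∑ j', (U i * M j' - A i j') * (M j')ᵀ = U' i := by
      rw [hU' i, hGsum]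
    calc ∑ j, (1/2:ℝ) * ∑ k, ∑ l, (A i j k l - (U' i * diagonal (s i j) * (V j)ᵀ) k l) ^ 2
        = ∑ j, (1/2:ℝ) * ∑ k, ∑ l, (A i j k l
            - ((U i - ηU i • ∑ j', (U i * M j' - A i j') * (M j')ᵀ) * M j) k l) ^ 2 := by
          refine Finset.sum_congr rfl fun j _ => ?_
          have hprod : U' i * diagonal (s i j) * (V j)ᵀ
              = (U i - ηU i • ∑ j', (U i * M j' - A i j') * (M j')ᵀ) * M j := by
            rw [← hX, Matrix.mul_assoc]
          rw [hprod]
      _ ≤ ∑ j, (1/2:ℝ) * ∑ k, ∑ l, (A i j k l - (U i * M j) k l) ^ 2 := key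
      _ = ∑ j, (1/2:ℝ) * ∑ k, ∑ l,
            (A i j k l - (U i * diagonal (s i j) * (V j)ᵀ) k l) ^ 2 := by
          refine Finset.sum_congr rfl fun j _ => ?_
          simp only [hM, Matrix.mul_assoc]
  -- Step 2 : update V
  have step2 : L U' V' s ≤ L U' V s := by
    rw [hL, hL]
    rw [Finset.sum_comm (f := fun i j => (1/2:ℝ) * ∑ k, ∑ l,
      (A i j k l - (U' i * Matrix.diagonal (s i j) * (V' j)ᵀ) k l) ^ 2)]
    rw [Finset.sum_comm (f := fun i j => (1/2:ℝ) * ∑ k, ∑ l,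
      (A i j k l - (U' i * Matrix.diagonal (s i j) * (V j)ᵀ) k l) ^ 2)]
    refine Finset.sum_le_sum fun j _ => ?_
    set M : Fin b → Matrix (Fin r) (Fin p) ℝ := fun i => diagonal (s i j) * (U' i)ᵀ with hM
    have hMt : ∀ i, (M i)ᵀ = U' i * diagonal (s i j) := fun i => by
      rw [hM, transpose_mul, transpose_transpose, diagonal_transpose]
    have hTT : ∀ (Y : Matrix (Fin p) (Fin r) ℝ) i,
        (U' i * diagonal (s i j) * Yᵀ)ᵀ = Y * M i := by
      intro Y i
      simp only [hM]
      rw [transpose_mul, transpose_mul, transpose_transpose, diagonal_transpose]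
    have htr : ∀ (Y : Matrix (Fin p) (Fin r) ℝ) (i : Fin b),
        (∑ k, ∑ l, (A i j k l - (U' i * diagonal (s i j) * Yᵀ) k l) ^ 2)
        = ∑ k, ∑ l, ((A i j)ᵀ k l - (Y * M i) k l) ^ 2 := by
      intro Y i
      rw [Finset.sum_comm]
      refine Finset.sum_congr rfl fun l _ => Finset.sum_congr rfl fun k _ => ?_
      rw [← hTT Y i]
      simp [transpose_apply]
    have hHeq : (∑ i, M i * (M i)ᵀ)
        = ∑ i, diagonal (s i j) * (U' i)ᵀ * U' i * diagonal (s i j) :=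
      Finset.sum_congr rfl fun i _ => by simp only [hMt, hM, Matrix.mul_assoc, transpose_mul, transpose_transpose, diagonal_transpose]
    have hη2 : ηV j * sigma1 (∑ i, M i * (M i)ᵀ) ≤ 1 := by
      rw [hHeq]; exact eta_mul_le_one (hηV j).1 (hηV j).2 (norm_nonneg _)
    have key := gd_step (fun i => (A i j)ᵀ) M (V j) (ηV j) (hηV j).1 hη2
    have hGsum : (∑ i, (V j * M i - (A i j)ᵀ) * (M i)ᵀ)
        = ∑ i, (U' i * diagonal (s i j) * (V j)ᵀ - A i j)ᵀ * (U' i * diagonal (s i j)) :=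
      Finset.sum_congr rfl fun i _ => by
        rw [hMt, transpose_sub, hTT (V j) i]
    have hX : V j - ηV j • ∑ i, (V j * M i - (A i j)ᵀ) * (M i)ᵀ = V' j := by
      rw [hV' j, hGsum]
    calc ∑ i, (1/2:ℝ) * ∑ k, ∑ l, (A i j k l - (U' i * diagonal (s i j) * (V' j)ᵀ) k l) ^ 2
        = ∑ i, (1/2:ℝ) * ∑ k, ∑ l, ((A i j)ᵀ k l
            - ((V j - ηV j • ∑ i', (V j * M i' - (A i' j)ᵀ) * (M i')ᵀ) * M i) k l) ^ 2 := by
          refine Finset.sum_congr rfl fun i _ => ?_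
          rw [htr (V' j) i, ← hX]
      _ ≤ ∑ i, (1/2:ℝ) * ∑ k, ∑ l, ((A i j)ᵀ k l - (V j * M i) k l) ^ 2 := key
      _ = ∑ i, (1/2:ℝ) * ∑ k, ∑ l,
            (A i j k l - (U' i * diagonal (s i j) * (V j)ᵀ) k l) ^ 2 := by
          refine Finset.sum_congr rfl fun i _ => ?_
          rw [htr (V j) i]
  -- Step 3 : update s
  have step3 : L U' V' s' ≤ L U' V' s := by
    rw [hL, hL]
    refine Finset.sum_le_sum fun i _ => ?_
    refine Finset.sum_le_sum fun j _ => ?_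
    rw [hs' i j]
    exact gd_step_s (A i j) (U' i) (V' j) (s i j) (ηs i j) (hηs i j).1
      (eta_mul_le_one (hηs i j).1 (hηs i j).2 (norm_nonneg _))
  linarith
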